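/- arXiv:2009.00159 — 4 statements merged into one kernel-verified Lean document; each statement's English description precedes it below -/
import Mathlib

section
/- Let n ≥ 1 and let Φ : Matrix (Fin n) (Fin n) ℂ →ₗ[ℂ] Matrix (Fin n) (Fin n) ℂ be a linear map. Then Φ is completely positive and trace preserving if and only if there exists a finite family of matrices K₁, …, K_r ∈ Matrix (Fin n) (Fin n) ℂ with Σ_i K_iᴴ * K_i = 1 such that Φ(X) = Σ_i K_i * X * K_iᴴ for every X (a Kraus representation). -/
open scoped Kronecker ComplexOrder Matrix

noncomputable section

/-- The block of `M` at position `(a, b)` when `M` is viewed as a block matrix indexed by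
`Fin k × Fin n`. -/
def blockAt {k n : ℕ} (M : Matrix (Fin k × Fin n) (Fin k × Fin n) ℂ) (a b : Fin k) :
    Matrix (Fin n) (Fin n) ℂ :=
  Matrix.of fun i j => M (a, i) (b, j)

/-- The extension `id_k ⊗ Φ` of a linear map `Φ` acting blockwise on block matrices. -/
def matExtend {n m : ℕ} (k : ℕ) (Φ : Matrix (Fin n) (Fin n) ℂ →ₗ[ℂ] Matrix (Fin m) (Fin m) ℂ)
    (M : Matrix (Fin k × Fin n) (Fin k × Fin n) ℂ) :
    Matrix (Fin k × Fin m) (Fin k × Fin m) ℂ :=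
  ∑ a : Fin k, ∑ b : Fin k,
    (Matrix.single a b (1 : ℂ)) ⊗ₖ Φ (blockAt M a b)

/-- A linear map on matrices is completely positive if all its extensions `id_k ⊗ Φ`
map positive semidefinite matrices to positive semidefinite matrices. -/
def IsCompletelyPositive {n m : ℕ}
    (Φ : Matrix (Fin n) (Fin n) ℂ →ₗ[ℂ] Matrix (Fin m) (Fin m) ℂ) : Prop :=
  ∀ k : ℕ, 1 ≤ k → ∀ M : Matrix (Fin k × Fin n) (Fin k × Fin n) ℂ,
    M.PosSemidef → (matExtend k Φ M).PosSemidef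

/-- A linear map on matrices is trace preserving if it leaves the trace invariant. -/
def IsTracePreserving {n : ℕ}
    (Φ : Matrix (Fin n) (Fin n) ℂ →ₗ[ℂ] Matrix (Fin n) (Fin n) ℂ) : Prop :=
  ∀ X, (Φ X).trace = X.trace

lemma matExtend_apply {n m : ℕ} (k : ℕ)
    (Φ : Matrix (Fin n) (Fin n) ℂ →ₗ[ℂ] Matrix (Fin m) (Fin m) ℂ)
    (M : Matrix (Fin k × Fin n) (Fin k × Fin n) ℂ) (a b : Fin k) (i j : Fin m) :
    matExtend k Φ M (a, i) (b, j) = Φ (blockAt M a b) i j := by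
  simp [matExtend, Matrix.sum_apply, Matrix.kroneckerMap_apply, Matrix.single,
    ite_and, Finset.sum_ite_eq, Finset.sum_ite_eq']

lemma kron_conj_apply {k n : ℕ} (K : Matrix (Fin n) (Fin n) ℂ)
    (M : Matrix (Fin k × Fin n) (Fin k × Fin n) ℂ) (a b : Fin k) (i j : Fin n) :
    (((1 : Matrix (Fin k) (Fin k) ℂ) ⊗ₖ K) * M *
        ((1 : Matrix (Fin k) (Fin k) ℂ) ⊗ₖ K)ᴴ) (a, i) (b, j)
      = (K * blockAt M a b * Kᴴ) i j := by
  simp only [Matrix.mul_apply, Matrix.conjTranspose_apply, Matrix.kroneckerMap_apply,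
    Fintype.sum_prod_type, Matrix.one_apply, blockAt, Matrix.of_apply]
  simp [ite_mul, mul_ite, Finset.sum_ite_eq, Finset.sum_ite_eq', Finset.mul_sum,
    Finset.sum_mul, apply_ite (starRingEnd ℂ)]

set_option maxHeartbeats 1600000 in
/-- **Kraus representation.** A linear map on `n × n` complex matrices is a quantum channel
(completely positive and trace preserving) if and only if it admits a Kraus representation. -/
theorem cptp_iff_kraus (n : ℕ) (hn : 1 ≤ n)
    (Φ : Matrix (Fin n) (Fin n) ℂ →ₗ[ℂ] Matrix (Fin n) (Fin n) ℂ) :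
    (IsCompletelyPositive Φ ∧ IsTracePreserving Φ) ↔
      ∃ (r : ℕ) (K : Fin r → Matrix (Fin n) (Fin n) ℂ),
        (∑ i, (K i)ᴴ * K i = 1) ∧ ∀ X, Φ X = ∑ i, K i * X * (K i)ᴴ := by
  constructor
  · rintro ⟨hCP, hTP⟩
    -- `Aᴴ * A` is the (unnormalized) maximally entangled state; its image is the Choi matrix.
    set A : Matrix (Fin 1) (Fin n × Fin n) ℂ :=
      Matrix.of fun _ p => if p.1 = p.2 then 1 else 0 with hA
    have hΩ : (Aᴴ * A).PosSemidef := Matrix.posSemidef_conjTranspose_mul_self A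
    have hblock : ∀ a b : Fin n, blockAt (Aᴴ * A) a b = Matrix.single a b 1 := by
      intro a b
      ext i j
      simp only [blockAt, hA, Matrix.mul_apply, Matrix.conjTranspose_apply, Matrix.of_apply,
        Matrix.single]
      by_cases h1 : a = i <;> by_cases h2 : b = j <;> simp [h1, h2, eq_comm]
    have hC : (matExtend n Φ (Aᴴ * A)).PosSemidef := hCP n hn _ hΩ
    set C := matExtend n Φ (Aᴴ * A) with hCdef
    have hCapp : ∀ (a b i j : Fin n), C (a, i) (b, j) = Φ (Matrix.single a b 1) i j := by
      intro a b i j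
      rw [hCdef, matExtend_apply, hblock]
    obtain ⟨S, hSH, hSS⟩ : ∃ S : Matrix (Fin n × Fin n) (Fin n × Fin n) ℂ, Sᴴ = S ∧ S * S = C := by
      open scoped MatrixOrder in
      exact ⟨CFC.sqrt C, (Matrix.nonneg_iff_posSemidef.mp (CFC.sqrt_nonneg C)).isHermitian,
        CFC.sqrt_mul_sqrt_self C hC.nonneg⟩
    have hCent : ∀ p q, C p q = ∑ t, (starRingEnd ℂ) (S t p) * S t q := by
      intro p q
      rw [← hSS, Matrix.mul_apply]
      refine Finset.sum_congr rfl fun t _ => ?_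
      congr 1
      conv_lhs => rw [← hSH]
      rfl
    set e := (finProdFinEquiv : Fin n × Fin n ≃ Fin (n * n)) with he
    set K : Fin (n * n) → Matrix (Fin n) (Fin n) ℂ :=
      fun r => Matrix.of fun i a => (starRingEnd ℂ) (S (e.symm r) (a, i)) with hKdef
    refine ⟨n * n, K, ?_, ?_⟩
    · -- trace condition
      ext a b
      have htr : (∑ i : Fin n, C (a, i) (b, i)) = if a = b then (1 : ℂ) else 0 := by
        have h1 : (∑ i : Fin n, C (a, i) (b, i)) = (Φ (Matrix.single a b 1)).trace := by
          rw [Matrix.trace]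
          exact Finset.sum_congr rfl fun i _ => hCapp a b i i
        rw [h1, hTP]
        by_cases hab : a = b
        · subst hab; simp
        · simp [Matrix.trace_single_eq_of_ne a b (1 : ℂ) hab, hab]
      have lhs_eq : (∑ r : Fin (n * n), (K r)ᴴ * K r) a b
          = ∑ t : Fin n × Fin n, ∑ i : Fin n,
              S t (a, i) * (starRingEnd ℂ) (S t (b, i)) := by
        rw [Matrix.sum_apply,
          ← Equiv.sum_comp e.symm
            (fun t => ∑ i : Fin n, S t (a, i) * (starRingEnd ℂ) (S t (b, i)))]
        refine Finset.sum_congr rfl fun r _ => ?_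
        simp [hKdef, Matrix.mul_apply, Matrix.conjTranspose_apply, mul_comm]
      rw [lhs_eq]
      have h2 : ∑ t : Fin n × Fin n, ∑ i : Fin n, S t (a, i) * (starRingEnd ℂ) (S t (b, i))
          = (starRingEnd ℂ) (∑ i : Fin n, C (a, i) (b, i)) := by
        rw [map_sum, Finset.sum_comm]
        refine Finset.sum_congr rfl fun i _ => ?_
        rw [hCent, map_sum]
        refine Finset.sum_congr rfl fun t _ => ?_
        simp [mul_comm]
      rw [h2, htr]
      simp [Matrix.one_apply, apply_ite (starRingEnd ℂ)]
    · -- Kraus representation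
      have hbasis : ∀ a b : Fin n, Φ (Matrix.single a b 1)
          = ∑ r, K r * Matrix.single a b 1 * (K r)ᴴ := by
        intro a b
        ext i j
        rw [← hCapp, hCent, Matrix.sum_apply,
          ← Equiv.sum_comp e.symm (fun t => (starRingEnd ℂ) (S t (a, i)) * S t (b, j))]
        refine Finset.sum_congr rfl fun r _ => ?_
        simp [hKdef, Matrix.mul_apply, Matrix.conjTranspose_apply, Matrix.single,
          ite_and, ite_mul, mul_ite, Finset.sum_ite_eq, Finset.sum_ite_eq']
      intro X
      have hX := Matrix.matrix_eq_sum_single X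
      have hsmul : ∀ a b : Fin n, Matrix.single a b (X a b)
          = X a b • Matrix.single a b (1 : ℂ) := by
        intro a b
        rw [Matrix.smul_single, smul_eq_mul, mul_one]
      have step : ∀ r, K r * X * (K r)ᴴ
          = ∑ a, ∑ b, X a b • (K r * Matrix.single a b 1 * (K r)ᴴ) := by
        intro r
        conv_lhs => rw [hX]
        rw [Finset.mul_sum, Finset.sum_mul]
        refine Finset.sum_congr rfl fun a _ => ?_
        rw [Finset.mul_sum, Finset.sum_mul]
        refine Finset.sum_congr rfl fun b _ => ?_
        rw [hsmul, Matrix.mul_smul, Matrix.smul_mul]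
      calc Φ X = Φ (∑ a, ∑ b, Matrix.single a b (X a b)) := by rw [← hX]
        _ = ∑ a, ∑ b, X a b • Φ (Matrix.single a b 1) := by
            rw [map_sum]
            refine Finset.sum_congr rfl fun a _ => ?_
            rw [map_sum]
            refine Finset.sum_congr rfl fun b _ => ?_
            rw [hsmul, map_smul]
        _ = ∑ a, ∑ b, ∑ r, X a b • (K r * Matrix.single a b 1 * (K r)ᴴ) := by
            refine Finset.sum_congr rfl fun a _ => Finset.sum_congr rfl fun b _ => ?_
            rw [hbasis, Finset.smul_sum]
        _ = ∑ a, ∑ r, ∑ b, X a b • (K r * Matrix.single a b 1 * (K r)ᴴ) :=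
            Finset.sum_congr rfl fun a _ => Finset.sum_comm
        _ = ∑ r, ∑ a, ∑ b, X a b • (K r * Matrix.single a b 1 * (K r)ᴴ) :=
            Finset.sum_comm
        _ = ∑ r, K r * X * (K r)ᴴ :=
            Finset.sum_congr rfl fun r _ => (step r).symm
  · rintro ⟨r, K, hK1, hKraus⟩
    constructor
    · intro k hk M hM
      have heq : matExtend k Φ M
          = ∑ i, ((1 : Matrix (Fin k) (Fin k) ℂ) ⊗ₖ K i) * M *
              ((1 : Matrix (Fin k) (Fin k) ℂ) ⊗ₖ K i)ᴴ := by
        ext ⟨a, i⟩ ⟨b, j⟩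
        rw [matExtend_apply, hKraus, Matrix.sum_apply, Matrix.sum_apply]
        exact Finset.sum_congr rfl fun t _ => (kron_conj_apply (K t) M a b i j).symm
      rw [heq]
      apply Finset.sum_induction _ _ (fun A B hA hB => hA.add hB) Matrix.PosSemidef.zero
      intro t _
      exact hM.mul_mul_conjTranspose_same _
    · intro X
      rw [hKraus, Matrix.trace_sum]
      have h : ∀ i, (K i * X * (K i)ᴴ).trace = ((K i)ᴴ * K i * X).trace := by
        intro i
        rw [Matrix.trace_mul_cycle, Matrix.mul_assoc]
      rw [Finset.sum_congr rfl fun i _ => h i, ← Matrix.trace_sum]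
      simp_rw [← Finset.sum_mul]
      rw [hK1, Matrix.one_mul]
end
end

section
/- Let n, m ≥ 1, let H be a Hermitian matrix in Matrix ((Fin n) × (Fin m)) ((Fin n) × (Fin m)) ℂ, let ρ_E be a density matrix in Matrix (Fin m) (Fin m) ℂ, and let L be a linear map on Matrix (Fin n) (Fin n) ℂ. If for every t ≥ 0 and every ρ ∈ Matrix (Fin n) (Fin n) ℂ one has exp(t • L)(ρ) = tr₂(exp(−(i t) • H) * (ρ ⊗ₖ ρ_E) * exp((i t) • H)), then there exists a Hermitian matrix H̃ ∈ Matrix (Fin n) (Fin n) ℂ such that L(ρ) = i(ρ*H̃ − H̃*ρ) for all ρ; in particular, for each t ≥ 0 the map exp(t • L) is a unitary conjugation. -/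
open scoped Kronecker ComplexOrder Matrix

attribute [local instance] Matrix.frobeniusNormedAddCommGroup Matrix.frobeniusNormedSpace

noncomputable section

/-- The partial trace over the second tensor factor. -/
def ptrace2 {n m : ℕ} (M : Matrix (Fin n × Fin m) (Fin n × Fin m) ℂ) :
    Matrix (Fin n) (Fin n) ℂ :=
  Matrix.of fun i j => ∑ k : Fin m, M (i, k) (j, k)

namespace ExactLindbladAux

attribute [local instance] Matrix.frobeniusNormedRing Matrix.frobeniusNormedAlgebra

variable {n m : ℕ}

theorem myHasDerivAt_exp {𝔸 : Type*} [NormedRing 𝔸] [NormedAlgebra ℂ 𝔸] [CompleteSpace 𝔸]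
    (x : 𝔸) : HasDerivAt (fun u : ℝ => NormedSpace.exp ((u : ℂ) • x)) x 0 := by
  have h : HasDerivAt (fun u : ℂ => NormedSpace.exp (u • x))
      (NormedSpace.exp (((0:ℝ):ℂ) • x) * x) ((fun t : ℝ => (t:ℂ)) 0) := by
    simpa using hasDerivAt_exp_smul_const (𝕂 := ℂ) x (0:ℂ)
  have h2 : HasDerivAt (fun t : ℝ => (t:ℂ)) 1 0 := by
    simpa using (hasDerivAt_id (0:ℝ)).ofReal_comp
  have h3 := HasDerivAt.scomp (0:ℝ) h h2
  simp at h3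
  exact h3

theorem ptrace2_mul_kron (M : Matrix (Fin n × Fin m) (Fin n × Fin m) ℂ)
    (ρ : Matrix (Fin n) (Fin n) ℂ) (E : Matrix (Fin m) (Fin m) ℂ) :
    ptrace2 (M * (ρ ⊗ₖ E)) = ptrace2 (M * ((1 : Matrix (Fin n) (Fin n) ℂ) ⊗ₖ E)) * ρ := by
  ext i j
  simp only [ptrace2, Matrix.of_apply, Matrix.mul_apply, Matrix.kroneckerMap_apply,
    Fintype.sum_prod_type, Finset.sum_mul, Finset.mul_sum, Matrix.one_apply, ite_mul, one_mul,
    zero_mul, mul_ite, mul_zero, mul_one, Finset.sum_ite_irrel, Finset.sum_const_zero,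
    Finset.sum_ite_eq, Finset.sum_ite_eq', Finset.mem_univ, if_true]
  rw [Finset.sum_comm]
  exact Finset.sum_congr rfl fun p _ => Finset.sum_congr rfl fun k _ =>
    Finset.sum_congr rfl fun q _ => by ring

theorem ptrace2_kron_mul (M : Matrix (Fin n × Fin m) (Fin n × Fin m) ℂ)
    (ρ : Matrix (Fin n) (Fin n) ℂ) (E : Matrix (Fin m) (Fin m) ℂ) :
    ptrace2 ((ρ ⊗ₖ E) * M) = ρ * ptrace2 (((1 : Matrix (Fin n) (Fin n) ℂ) ⊗ₖ E) * M) := by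
  ext i j
  simp only [ptrace2, Matrix.of_apply, Matrix.mul_apply, Matrix.kroneckerMap_apply,
    Fintype.sum_prod_type, Finset.sum_mul, Finset.mul_sum, Matrix.one_apply, ite_mul, one_mul,
    zero_mul, mul_ite, mul_zero, mul_one, Finset.sum_ite_irrel, Finset.sum_const_zero,
    Finset.sum_ite_eq, Finset.sum_ite_eq', Finset.mem_univ, if_true]
  rw [Finset.sum_comm]
  exact Finset.sum_congr rfl fun p _ => Finset.sum_congr rfl fun k _ =>
    Finset.sum_congr rfl fun q _ => by ring

theorem ptrace2_kron_comm (M : Matrix (Fin n × Fin m) (Fin n × Fin m) ℂ)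
    (E : Matrix (Fin m) (Fin m) ℂ) :
    ptrace2 (((1 : Matrix (Fin n) (Fin n) ℂ) ⊗ₖ E) * M)
      = ptrace2 (M * ((1 : Matrix (Fin n) (Fin n) ℂ) ⊗ₖ E)) := by
  ext i j
  simp only [ptrace2, Matrix.of_apply, Matrix.mul_apply, Matrix.kroneckerMap_apply,
    Fintype.sum_prod_type, Finset.sum_mul, Finset.mul_sum, Matrix.one_apply, ite_mul, one_mul,
    zero_mul, mul_ite, mul_zero, mul_one, Finset.sum_ite_irrel, Finset.sum_const_zero,
    Finset.sum_ite_eq, Finset.sum_ite_eq', Finset.mem_univ, if_true]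
  rw [Finset.sum_comm]
  exact Finset.sum_congr rfl fun p _ => Finset.sum_congr rfl fun k _ => by ring

theorem ptrace2_conjTranspose (M : Matrix (Fin n × Fin m) (Fin n × Fin m) ℂ) :
    (ptrace2 M)ᴴ = ptrace2 Mᴴ := by
  ext i j
  simp [ptrace2, Matrix.conjTranspose_apply]

theorem ptrace2_add (M N : Matrix (Fin n × Fin m) (Fin n × Fin m) ℂ) :
    ptrace2 (M + N) = ptrace2 M + ptrace2 N := by
  ext i j
  simp [ptrace2, Finset.sum_add_distrib]

theorem ptrace2_smul (c : ℂ) (M : Matrix (Fin n × Fin m) (Fin n × Fin m) ℂ) :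
    ptrace2 (c • M) = c • ptrace2 M := by
  ext i j
  simp [ptrace2, Finset.mul_sum]

/-- `ptrace2` as a continuous `ℝ`-linear map. -/
def ptrace2CLM (n m : ℕ) :
    Matrix (Fin n × Fin m) (Fin n × Fin m) ℂ →L[ℝ] Matrix (Fin n) (Fin n) ℂ :=
  (LinearMap.toContinuousLinearMap
    { toFun := ptrace2
      map_add' := ptrace2_add
      map_smul' := fun c M => ptrace2_smul c M }).restrictScalars ℝ

@[simp] theorem ptrace2CLM_apply (M : Matrix (Fin n × Fin m) (Fin n × Fin m) ℂ) :
    ptrace2CLM n m M = ptrace2 M := rfl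

abbrev MnC (n : ℕ) := Matrix (Fin n) (Fin n) ℂ

/-- Left-multiplication as a ring hom into continuous linear endomorphisms. -/
def lmulRingHom (n : ℕ) : MnC n →+* (@ContinuousLinearMap ℂ ℂ _ _ (RingHom.id ℂ) (MnC n)
    PseudoMetricSpace.toUniformSpace.toTopologicalSpace _ (MnC n)
    PseudoMetricSpace.toUniformSpace.toTopologicalSpace _ _ _) where
  toFun A := ContinuousLinearMap.mul ℂ (MnC n) A
  map_one' := by ext x : 1; simp
  map_mul' A B := by ext x : 1; simp [mul_assoc]
  map_zero' := by ext x : 1; simp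
  map_add' A B := by ext x : 1; simp [add_mul]

/-- Right-multiplication as a ring hom from the opposite algebra. -/
def rmulRingHom (n : ℕ) : (MnC n)ᵐᵒᵖ →+* (@ContinuousLinearMap ℂ ℂ _ _ (RingHom.id ℂ) (MnC n)
    PseudoMetricSpace.toUniformSpace.toTopologicalSpace _ (MnC n)
    PseudoMetricSpace.toUniformSpace.toTopologicalSpace _ _ _) where
  toFun A := (ContinuousLinearMap.mul ℂ (MnC n)).flip A.unop
  map_one' := by ext x : 1; simp
  map_mul' A B := by ext x : 1; simp [mul_assoc]
  map_zero' := by ext x : 1; simp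
  map_add' A B := by ext x : 1; simp [mul_add]

@[simp] theorem lmulRingHom_apply (A x : MnC n) :
    lmulRingHom n A x = A * x := rfl

@[simp] theorem rmulRingHom_apply (A x : MnC n) :
    rmulRingHom n (MulOpposite.op A) x = x * A := rfl

theorem lmul_exp (A : MnC n) :
    NormedSpace.exp (lmulRingHom n A) = lmulRingHom n (NormedSpace.exp A) :=
  (NormedSpace.map_exp (lmulRingHom n) (ContinuousLinearMap.mul ℂ (MnC n)).continuous A).symm

theorem rmul_exp (A : MnC n) :
    NormedSpace.exp (rmulRingHom n (MulOpposite.op A))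
      = rmulRingHom n (MulOpposite.op (NormedSpace.exp A)) := by
  have hc : Continuous (rmulRingHom (n := n)) :=
    (ContinuousLinearMap.mul ℂ (MnC n)).flip.continuous.comp MulOpposite.continuous_unop
  rw [← NormedSpace.exp_op, ← NormedSpace.map_exp (rmulRingHom n) hc]
  rfl

theorem kron_conjTranspose {a b : ℕ} (A : Matrix (Fin a) (Fin a) ℂ)
    (B : Matrix (Fin b) (Fin b) ℂ) : (A ⊗ₖ B)ᴴ = Aᴴ ⊗ₖ Bᴴ := by
  ext ⟨i, k⟩ ⟨j, l⟩
  simp [Matrix.conjTranspose_apply, Matrix.kroneckerMap_apply]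

end ExactLindbladAux

open ExactLindbladAux

set_option maxHeartbeats 1000000 in
/-- **Exact dynamics with a Lindblad master equation (finite-dimensional environment).**
If a semigroup `exp (t • L)` reproduces, for all `t ≥ 0`, the exact reduced dynamics of a
finite-dimensional global Hamiltonian evolution, then `L` is a Hamiltonian generator
`ρ ↦ i (ρ H̃ − H̃ ρ)`; in particular each `exp (t • L)` is a unitary conjugation. -/
theorem exact_lindblad_dynamics_is_unitary {n m : ℕ} (hn : 1 ≤ n) (hm : 1 ≤ m)
    (H : Matrix (Fin n × Fin m) (Fin n × Fin m) ℂ) (hH : H.IsHermitian)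
    (ρE : Matrix (Fin m) (Fin m) ℂ) (hρE : ρE.PosSemidef) (hρEtr : ρE.trace = 1)
    (L : @ContinuousLinearMap ℂ ℂ _ _ (RingHom.id ℂ) (Matrix (Fin n) (Fin n) ℂ)
      PseudoMetricSpace.toUniformSpace.toTopologicalSpace _ (Matrix (Fin n) (Fin n) ℂ)
      PseudoMetricSpace.toUniformSpace.toTopologicalSpace _ _ _)
    (hdyn : ∀ t : ℝ, 0 ≤ t → ∀ ρ : Matrix (Fin n) (Fin n) ℂ,
      NormedSpace.exp (t • L) ρ =
        ptrace2 (NormedSpace.exp ((-(Complex.I * (t : ℂ))) • H) * (ρ ⊗ₖ ρE) *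
          NormedSpace.exp ((Complex.I * (t : ℂ)) • H))) :
    (∃ H' : Matrix (Fin n) (Fin n) ℂ, H'.IsHermitian ∧
      ∀ ρ : Matrix (Fin n) (Fin n) ℂ, L ρ = Complex.I • (ρ * H' - H' * ρ)) ∧
    (∀ t : ℝ, 0 ≤ t → ∃ U : Matrix (Fin n) (Fin n) ℂ,
      Uᴴ * U = 1 ∧ U * Uᴴ = 1 ∧
      ∀ ρ : Matrix (Fin n) (Fin n) ℂ, NormedSpace.exp (t • L) ρ = U * ρ * Uᴴ) := by
  classical
  letI : NormedRing (Matrix (Fin n) (Fin n) ℂ) := Matrix.frobeniusNormedRing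
  letI : NormedAlgebra ℂ (Matrix (Fin n) (Fin n) ℂ) := Matrix.frobeniusNormedAlgebra
  letI : NormedRing (Matrix (Fin n × Fin m) (Fin n × Fin m) ℂ) := Matrix.frobeniusNormedRing
  letI : NormedAlgebra ℂ (Matrix (Fin n × Fin m) (Fin n × Fin m) ℂ) :=
    Matrix.frobeniusNormedAlgebra
  set X : Matrix (Fin n × Fin m) (Fin n × Fin m) ℂ := (-Complex.I) • H with hX
  set Y : Matrix (Fin n × Fin m) (Fin n × Fin m) ℂ := Complex.I • H with hY
  set H' : Matrix (Fin n) (Fin n) ℂ :=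
    ptrace2 (H * ((1 : Matrix (Fin n) (Fin n) ℂ) ⊗ₖ ρE)) with hH'def
  -- Hermiticity of H'
  have hH' : H'.IsHermitian := by
    rw [Matrix.IsHermitian, hH'def, ptrace2_conjTranspose, Matrix.conjTranspose_mul,
      hH.eq, kron_conjTranspose, Matrix.conjTranspose_one, hρE.1.eq,
      ptrace2_kron_comm]
  -- scalar smul compatibility
  have hXarg : ∀ t : ℝ, (t : ℂ) • X = (-(Complex.I * (t : ℂ))) • H := by
    intro t; rw [hX, smul_smul]; congr 1; ring
  have hYarg : ∀ t : ℝ, (t : ℂ) • Y = (Complex.I * (t : ℂ)) • H := by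
    intro t; rw [hY, smul_smul]; congr 1; ring
  have hLsmul : ∀ t : ℝ, (t : ℂ) • L = t • L := fun t => Complex.coe_smul t L
  -- The generator has Hamiltonian form
  have hL : ∀ ρ : Matrix (Fin n) (Fin n) ℂ, L ρ = Complex.I • (ρ * H' - H' * ρ) := by
    intro ρ
    set C : Matrix (Fin n × Fin m) (Fin n × Fin m) ℂ := ρ ⊗ₖ ρE with hC
    -- derivative of the reduced dynamics at 0
    have hA : HasDerivAt (fun t : ℝ => NormedSpace.exp ((t : ℂ) • X)) X 0 :=
      myHasDerivAt_exp X
    have hB : HasDerivAt (fun t : ℝ => NormedSpace.exp ((t : ℂ) • Y)) Y 0 :=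
      myHasDerivAt_exp Y
    have hAB : HasDerivAt
        (fun t : ℝ => NormedSpace.exp ((t : ℂ) • X) * C * NormedSpace.exp ((t : ℂ) • Y))
        (X * C + C * Y) 0 := by
      have h := (hA.mul_const C).mul hB
      simp [NormedSpace.exp_zero] at h
      exact h
    have hg : HasDerivAt
        (fun t : ℝ => ptrace2CLM n m
          (NormedSpace.exp ((t : ℂ) • X) * C * NormedSpace.exp ((t : ℂ) • Y)))
        (ptrace2CLM n m (X * C + C * Y)) 0 :=
      (ptrace2CLM n m).hasFDerivAt.comp_hasDerivAt 0 hAB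
    -- derivative of the semigroup at 0
    have hf : HasDerivAt (fun t : ℝ => NormedSpace.exp (t • L) ρ) (L ρ) 0 := by
      have h1 : HasDerivAt (fun t : ℝ => NormedSpace.exp (t • L)) L 0 := by
        have := myHasDerivAt_exp L
        simpa [hLsmul] using this
      have h2 := (((ContinuousLinearMap.apply ℂ (Matrix (Fin n) (Fin n) ℂ)
        ρ).restrictScalars ℝ).hasFDerivAt).comp_hasDerivAt 0 h1
      exact h2
    -- the two functions agree on `Ici 0`
    have hEq : ∀ x ∈ Set.Ici (0:ℝ), (fun t : ℝ => NormedSpace.exp (t • L) ρ) x =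
        (fun t : ℝ => ptrace2CLM n m
          (NormedSpace.exp ((t : ℂ) • X) * C * NormedSpace.exp ((t : ℂ) • Y))) x := by
      intro x hx
      simp only [ptrace2CLM_apply, hXarg, hYarg, hC]
      exact hdyn x hx ρ
    have hu : UniqueDiffWithinAt ℝ (Set.Ici (0:ℝ)) 0 :=
      uniqueDiffOn_Ici 0 0 Set.self_mem_Ici
    have hfW : HasDerivWithinAt (fun t : ℝ => NormedSpace.exp (t • L) ρ) (L ρ)
        (Set.Ici (0:ℝ)) 0 := hf.hasDerivWithinAt
    have hgW : HasDerivWithinAt (fun t : ℝ => NormedSpace.exp (t • L) ρ)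
        (ptrace2CLM n m (X * C + C * Y)) (Set.Ici (0:ℝ)) 0 :=
      hg.hasDerivWithinAt.congr hEq (hEq 0 Set.self_mem_Ici)
    have hkey : L ρ = ptrace2CLM n m (X * C + C * Y) := by
      rw [← hfW.derivWithin hu, hgW.derivWithin hu]
    rw [hkey]
    -- compute the partial trace
    have h1 : X * C = (-Complex.I) • (H * C) := by rw [hX, Matrix.smul_mul]
    have h2 : C * Y = Complex.I • (C * H) := by rw [hY, Matrix.mul_smul]
    rw [ptrace2CLM_apply, ptrace2_add, h1, h2, ptrace2_smul, ptrace2_smul, hC,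
      ptrace2_mul_kron, ptrace2_kron_mul, ptrace2_kron_comm, ← hH'def]
    rw [smul_sub]
    module
  refine ⟨⟨H', hH', hL⟩, ?_⟩
  -- Part 2: each `exp (t • L)` is a unitary conjugation
  intro t ht
  set X' : Matrix (Fin n) (Fin n) ℂ := (-Complex.I) • H' with hX'
  set Y' : Matrix (Fin n) (Fin n) ℂ := Complex.I • H' with hY'
  have hcommXY : Commute (t • Y') (t • X') := by
    show _ * _ = _ * _
    rw [hX', hY']
    simp only [smul_mul_assoc, mul_smul_comm]
    module
  have hsum : t • Y' + t • X' = 0 := by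
    rw [hX', hY', ← smul_add, ← add_smul]
    simp
  have hsum' : t • X' + t • Y' = 0 := by rw [add_comm]; exact hsum
  set U : Matrix (Fin n) (Fin n) ℂ := NormedSpace.exp (t • X') with hU
  have hUadj : Uᴴ = NormedSpace.exp (t • Y') := by
    rw [hU, ← Matrix.star_eq_conjTranspose, NormedSpace.star_exp]
    congr 1
    rw [hX', hY', star_smul, star_smul, star_trivial, Matrix.star_eq_conjTranspose, hH'.eq]
    simp
  refine ⟨U, ?_, ?_, ?_⟩
  · rw [hUadj, hU, ← Matrix.exp_add_of_commute _ _ hcommXY, hsum, NormedSpace.exp_zero]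
  · rw [hUadj, hU, ← Matrix.exp_add_of_commute _ _ hcommXY.symm, hsum', NormedSpace.exp_zero]
  · intro ρ
    have hdecomp : t • L = lmulRingHom n (t • X') + rmulRingHom n (MulOpposite.op (t • Y')) := by
      refine ContinuousLinearMap.ext fun σ => ?_
      simp only [ContinuousLinearMap.add_apply, ContinuousLinearMap.smul_apply,
        lmulRingHom_apply, rmulRingHom_apply, hL σ, hX', hY']
      simp only [smul_mul_assoc, mul_smul_comm, smul_sub]
      module
    have hcommLR : Commute (lmulRingHom n (t • X')) (rmulRingHom n (MulOpposite.op (t • Y'))) := by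
      refine ContinuousLinearMap.ext fun σ => ?_
      simp only [ContinuousLinearMap.mul_apply, lmulRingHom_apply, rmulRingHom_apply, mul_assoc]
    letI : NormedAlgebra ℚ (@ContinuousLinearMap ℂ ℂ _ _ (RingHom.id ℂ) (MnC n)
      PseudoMetricSpace.toUniformSpace.toTopologicalSpace _ (MnC n)
      PseudoMetricSpace.toUniformSpace.toTopologicalSpace _ _ _) :=
      NormedAlgebra.restrictScalars ℚ ℂ _
    rw [hdecomp, NormedSpace.exp_add_of_commute hcommLR, lmul_exp, rmul_exp]
    simp only [ContinuousLinearMap.mul_apply, lmulRingHom_apply, rmulRingHom_apply]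
    rw [hUadj, hU, mul_assoc]
end
end

section
/- Let Φ be a linear map on Matrix (Fin n) (Fin n) ℂ that is trace preserving (trace(Φ(X)) = trace(X) for all X) and hermiticity preserving. Then Φ is a positive map, i.e. Φ maps every positive semidefinite matrix to a positive semidefinite matrix, if and only if ‖Φ(Δ)‖₁ ≤ ‖Δ‖₁ for every Hermitian matrix Δ ∈ Matrix (Fin n) (Fin n) ℂ. -/
open scoped ComplexOrder Matrix

noncomputable section

/-- The trace norm of a complex square matrix: the trace of the positive semidefinite
square root of `Aᴴ * A` (a real number). -/
def traceNorm {n : ℕ} (A : Matrix (Fin n) (Fin n) ℂ) : ℝ :=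
  (((Matrix.posSemidef_conjTranspose_mul_self A).1.eigenvectorUnitary.1 *
      Matrix.diagonal (((↑) : ℝ → ℂ) ∘ (√·) ∘ (Matrix.posSemidef_conjTranspose_mul_self A).1.eigenvalues) *
      (star (Matrix.posSemidef_conjTranspose_mul_self A).1.eigenvectorUnitary : Matrix (Fin n) (Fin n) ℂ)).trace).re

namespace TraceNormAux

open Matrix

variable {n : ℕ}

lemma trace_unitary_conj (U : Matrix.unitaryGroup (Fin n) ℂ)
    (D : Matrix (Fin n) (Fin n) ℂ) :
    ((U : Matrix (Fin n) (Fin n) ℂ) * D * star (U : Matrix (Fin n) (Fin n) ℂ)).trace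
      = D.trace := by
  rw [Matrix.trace_mul_cycle, Unitary.coe_star_mul_self, Matrix.one_mul]

open scoped MatrixOrder in
/-- Trace norm of a Hermitian matrix equals the sum of absolute values of eigenvalues. -/
lemma traceNorm_of_isHermitian {M : Matrix (Fin n) (Fin n) ℂ} (hM : M.IsHermitian) :
    traceNorm M = ∑ i, |hM.eigenvalues i| := by
  set U : Matrix (Fin n) (Fin n) ℂ := (hM.eigenvectorUnitary : Matrix (Fin n) (Fin n) ℂ)
  set S : Matrix (Fin n) (Fin n) ℂ :=
    U * diagonal (fun i => ((|hM.eigenvalues i| : ℝ) : ℂ)) * star U with hS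
  have hSposSemidef : S.PosSemidef := by
    refine PosSemidef.mul_mul_conjTranspose_same ?_ U
    refine posSemidef_diagonal_iff.mpr fun i => ?_
    simpa using Complex.zero_le_real.mpr (abs_nonneg _)
  have hsq : S ^ 2 = Mᴴ * M := by
    have hdiag : ∀ d : Fin n → ℂ, ∀ e : Fin n → ℂ,
        (U * diagonal d * star U) * (U * diagonal e * star U)
          = U * diagonal (fun i => d i * e i) * star U := by
      intro d e
      calc (U * diagonal d * star U) * (U * diagonal e * star U)
          = U * diagonal d * ((star U * U) * (diagonal e * star U)) := by
            simp only [Matrix.mul_assoc]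
        _ = U * diagonal (fun i => d i * e i) * star U := by
            rw [Unitary.coe_star_mul_self, Matrix.one_mul, ← Matrix.mul_assoc,
              Matrix.mul_assoc U, diagonal_mul_diagonal]
    have h1 : M = U * diagonal (fun i => (hM.eigenvalues i : ℂ)) * star U :=
      hM.spectral_theorem
    have h2 : Mᴴ * M = U * diagonal
        (fun i => (hM.eigenvalues i : ℂ) * (hM.eigenvalues i : ℂ)) * star U := by
      conv_lhs => rw [hM.eq, h1]
      exact hdiag _ _
    have hfun : (fun i => ((|hM.eigenvalues i| : ℝ) : ℂ) * ((|hM.eigenvalues i| : ℝ) : ℂ))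
        = fun i => (hM.eigenvalues i : ℂ) * (hM.eigenvalues i : ℂ) := by
      funext i
      rw [← Complex.ofReal_mul, ← Complex.ofReal_mul, abs_mul_abs_self]
    rw [sq, hS, hdiag, hfun, h2]
  have hsqrt : S = ((Matrix.posSemidef_conjTranspose_mul_self M).1.eigenvectorUnitary.1 *
      Matrix.diagonal (((↑) : ℝ → ℂ) ∘ (√·) ∘ (Matrix.posSemidef_conjTranspose_mul_self M).1.eigenvalues) *
      (star (Matrix.posSemidef_conjTranspose_mul_self M).1.eigenvectorUnitary : Matrix (Fin n) (Fin n) ℂ)) := by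
    have h0 : (0 : Matrix (Fin n) (Fin n) ℂ) ≤ Mᴴ * M :=
      Matrix.nonneg_iff_posSemidef.mpr (Matrix.posSemidef_conjTranspose_mul_self M)
    have e := CFC.sqrt_eq_real_sqrt (Mᴴ * M) h0
    rw [cfcₙ_eq_cfc, (Matrix.posSemidef_conjTranspose_mul_self M).1.cfc_eq] at e
    rw [← CFC.sqrt_unique (a := Mᴴ * M) (b := S) (by rw [← sq]; exact hsq)
      (Matrix.nonneg_iff_posSemidef.mpr hSposSemidef), e]
    rfl
  rw [traceNorm, ← hsqrt, hS, trace_unitary_conj ⟨U, hM.eigenvectorUnitary.2⟩, trace_diagonal]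
  push_cast
  rw [Complex.re_sum]
  simp

lemma re_trace_of_isHermitian {M : Matrix (Fin n) (Fin n) ℂ} (hM : M.IsHermitian) :
    M.trace.re = ∑ i, hM.eigenvalues i := by
  conv_lhs => rw [hM.spectral_theorem, Unitary.conjStarAlgAut_apply]
  rw [trace_unitary_conj ⟨_, hM.eigenvectorUnitary.2⟩, trace_diagonal]
  rw [Complex.re_sum]
  simp

/-- Diagonal entries (in the eigenbasis conjugation) of a PSD matrix have nonneg real part. -/
lemma diag_re_nonneg {A : Matrix (Fin n) (Fin n) ℂ} (hA : A.PosSemidef) (i : Fin n) :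
    0 ≤ (A i i).re := by
  have := hA.re_dotProduct_nonneg (Pi.single i 1)
  simpa [Matrix.mulVec_single, dotProduct, Pi.single_apply, Finset.sum_ite_eq,
    star_one] using this

/-- Key inequality: if a Hermitian matrix is the difference of two PSD matrices,
its trace norm is at most the sum of their traces. -/
lemma traceNorm_le_of_eq_sub {M A B : Matrix (Fin n) (Fin n) ℂ}
    (hM : M.IsHermitian) (hA : A.PosSemidef) (hB : B.PosSemidef)
    (h : M = A - B) :
    traceNorm M ≤ A.trace.re + B.trace.re := by
  set U : Matrix (Fin n) (Fin n) ℂ := (hM.eigenvectorUnitary : Matrix (Fin n) (Fin n) ℂ)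
  have hUU : star U * U = 1 := Unitary.coe_star_mul_self hM.eigenvectorUnitary
  set A' : Matrix (Fin n) (Fin n) ℂ := star U * A * U with hA'
  set B' : Matrix (Fin n) (Fin n) ℂ := star U * B * U with hB'
  have hA'pos : A'.PosSemidef := by
    exact hA.conjTranspose_mul_mul_same U
  have hB'pos : B'.PosSemidef := by
    exact hB.conjTranspose_mul_mul_same U
  have hdiag : A' - B' = diagonal (fun i => (hM.eigenvalues i : ℂ)) := by
    have := hM.conjStarAlgAut_star_eigenvectorUnitary
    simp only [Unitary.conjStarAlgAut_apply, Unitary.coe_star, star_star] at this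
    rw [hA', hB', ← Matrix.sub_mul, ← Matrix.mul_sub, ← h]
    exact this
  have key : ∀ i, |hM.eigenvalues i| ≤ (A' i i).re + (B' i i).re := by
    intro i
    have h1 : A' i i - B' i i = (hM.eigenvalues i : ℂ) := by
      have := congrArg (fun X : Matrix (Fin n) (Fin n) ℂ => X i i) hdiag
      simpa using this
    have h2 : (A' i i).re - (B' i i).re = hM.eigenvalues i := by
      have := congrArg Complex.re h1
      simpa using this
    have ha := diag_re_nonneg hA'pos i
    have hb := diag_re_nonneg hB'pos i
    rw [← h2]
    rcases abs_cases ((A' i i).re - (B' i i).re) with ⟨h3, _⟩ | ⟨h3, _⟩ <;> linarith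
  have hUU' : U * star U = 1 := Unitary.coe_mul_star_self hM.eigenvectorUnitary
  have htrA : A'.trace = A.trace := by
    rw [hA', Matrix.trace_mul_cycle, hUU', Matrix.one_mul]
  have htrB : B'.trace = B.trace := by
    rw [hB', Matrix.trace_mul_cycle, hUU', Matrix.one_mul]
  calc traceNorm M = ∑ i, |hM.eigenvalues i| := traceNorm_of_isHermitian hM
    _ ≤ ∑ i, ((A' i i).re + (B' i i).re) := Finset.sum_le_sum fun i _ => key i
    _ = A'.trace.re + B'.trace.re := by
        rw [Finset.sum_add_distrib, Matrix.trace, Matrix.trace, Complex.re_sum,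
          Complex.re_sum]
        rfl
    _ = A.trace.re + B.trace.re := by rw [htrA, htrB]

/-- Jordan decomposition of a Hermitian matrix with matching trace norm. -/
lemma exists_jordan {Δ : Matrix (Fin n) (Fin n) ℂ} (hΔ : Δ.IsHermitian) :
    ∃ P N : Matrix (Fin n) (Fin n) ℂ, P.PosSemidef ∧ N.PosSemidef ∧ Δ = P - N ∧
      P.trace.re + N.trace.re = traceNorm Δ := by
  set U : Matrix (Fin n) (Fin n) ℂ := (hΔ.eigenvectorUnitary : Matrix (Fin n) (Fin n) ℂ)
  refine ⟨U * diagonal (fun i => ((max (hΔ.eigenvalues i) 0 : ℝ) : ℂ)) * star U,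
    U * diagonal (fun i => ((max (-hΔ.eigenvalues i) 0 : ℝ) : ℂ)) * star U, ?_, ?_, ?_, ?_⟩
  · exact PosSemidef.mul_mul_conjTranspose_same
      (posSemidef_diagonal_iff.mpr fun i => by
        simpa using Complex.zero_le_real.mpr (le_max_right _ _)) U
  · exact PosSemidef.mul_mul_conjTranspose_same
      (posSemidef_diagonal_iff.mpr fun i => by
        simpa using Complex.zero_le_real.mpr (le_max_right _ _)) U
  · rw [← Matrix.sub_mul, ← Matrix.mul_sub, Matrix.diagonal_sub]
    conv_lhs => rw [hΔ.spectral_theorem, Unitary.conjStarAlgAut_apply]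
    congr 2
    have hfun : (RCLike.ofReal ∘ hΔ.eigenvalues : Fin n → ℂ)
        = fun i => ((max (hΔ.eigenvalues i) 0 : ℝ) : ℂ)
            - ((max (-hΔ.eigenvalues i) 0 : ℝ) : ℂ) := by
      funext i
      rw [Function.comp_apply, ← Complex.ofReal_sub, max_zero_sub_eq_self]
      rfl
    rw [hfun]
  · rw [trace_unitary_conj ⟨U, hΔ.eigenvectorUnitary.2⟩,
      trace_unitary_conj ⟨U, hΔ.eigenvectorUnitary.2⟩, trace_diagonal, trace_diagonal,
      traceNorm_of_isHermitian hΔ, Complex.re_sum, Complex.re_sum, ← Finset.sum_add_distrib]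
    refine Finset.sum_congr rfl fun i _ => ?_
    simp only [Complex.ofReal_re]
    rw [max_zero_add_max_neg_zero_eq_abs_self]

end TraceNormAux

open TraceNormAux Matrix in
/-- **Contractivity of positive trace-preserving maps.** A trace-preserving,
hermiticity-preserving linear map on complex matrices is positive if and only if it is
contractive with respect to the trace norm on Hermitian matrices. -/
theorem positive_iff_traceNorm_contractive {n : ℕ}
    (Φ : Matrix (Fin n) (Fin n) ℂ →ₗ[ℂ] Matrix (Fin n) (Fin n) ℂ)
    (hTP : ∀ X, (Φ X).trace = X.trace)
    (hHP : ∀ X, Φ Xᴴ = (Φ X)ᴴ) :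
    (∀ X : Matrix (Fin n) (Fin n) ℂ, X.PosSemidef → (Φ X).PosSemidef) ↔
      (∀ Δ : Matrix (Fin n) (Fin n) ℂ, Δ.IsHermitian → traceNorm (Φ Δ) ≤ traceNorm Δ) := by
  constructor
  · intro hpos Δ hΔ
    obtain ⟨P, N, hP, hN, hPN, htr⟩ := exists_jordan hΔ
    have hΦΔherm : (Φ Δ).IsHermitian := by
      have := hHP Δ
      rw [hΔ.eq] at this
      exact this.symm
    have hsub : Φ Δ = Φ P - Φ N := by rw [hPN, map_sub]
    calc traceNorm (Φ Δ) ≤ (Φ P).trace.re + (Φ N).trace.re :=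
          traceNorm_le_of_eq_sub hΦΔherm (hpos P hP) (hpos N hN) hsub
      _ = P.trace.re + N.trace.re := by rw [hTP, hTP]
      _ = traceNorm Δ := htr
  · intro hc X hX
    have hΦXherm : (Φ X).IsHermitian := by
      have := hHP X
      rw [hX.1.eq] at this
      exact this.symm
    have h1 : traceNorm (Φ X) ≤ traceNorm X := hc X hX.1
    have h2 : traceNorm X = X.trace.re := by
      rw [traceNorm_of_isHermitian hX.1, re_trace_of_isHermitian hX.1]
      exact Finset.sum_congr rfl fun i _ => abs_of_nonneg (hX.eigenvalues_nonneg i)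
    have h3 : X.trace.re = (Φ X).trace.re := by rw [hTP]
    have h4 : (Φ X).trace.re = ∑ i, hΦXherm.eigenvalues i := re_trace_of_isHermitian hΦXherm
    have h5 : traceNorm (Φ X) = ∑ i, |hΦXherm.eigenvalues i| :=
      traceNorm_of_isHermitian hΦXherm
    have hsum : ∑ i, |hΦXherm.eigenvalues i| ≤ ∑ i, hΦXherm.eigenvalues i := by
      rw [← h5, ← h4, ← h3, ← h2]; exact h1
    have heach : ∀ i, 0 ≤ hΦXherm.eigenvalues i := by
      by_contra hcon
      push_neg at hcon
      obtain ⟨j, hj⟩ := hcon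
      have : ∑ i, hΦXherm.eigenvalues i < ∑ i, |hΦXherm.eigenvalues i| := by
        refine Finset.sum_lt_sum (fun i _ => le_abs_self _) ⟨j, Finset.mem_univ j, ?_⟩
        rw [abs_of_neg hj]; linarith
      linarith
    exact hΦXherm.posSemidef_iff_eigenvalues_nonneg.mpr heach
end
end

section
/- Let d ≥ 2 and let L be a linear map on Matrix (Fin d) (Fin d) ℂ that is hermiticity preserving and satisfies trace(L(X)) = 0 for all X. Let F₁, …, F_{d²−1} be traceless matrices (trace(F_i) = 0) that together with F₀ = (1/√d)·1 form an orthonormal basis of Matrix (Fin d) (Fin d) ℂ for the Hilbert–Schmidt inner product ⟨A, B⟩ = trace(Aᴴ*B). Then there exist a Hermitian matrix H ∈ Matrix (Fin d) (Fin d) ℂ and a Hermitian matrix G ∈ Matrix (Fin (d²−1)) (Fin (d²−1)) ℂ such that for all ρ: L(ρ) = i(ρ*H − H*ρ) + Σ_{i,j} G i j • (F_i*ρ*F_jᴴ − (1/2)(F_jᴴ*F_i*ρ + ρ*F_jᴴ*F_i)). -/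
open scoped Matrix

noncomputable section

/-- **Specific form of generators of dynamical maps.** A hermiticity-preserving linear map
that annihilates the trace can be written in the standard (pre-Lindblad) form with respect to
any traceless orthonormal basis completing the normalized identity. -/
theorem generator_standard_form {d : ℕ} (hd : 2 ≤ d)
    (L : Matrix (Fin d) (Fin d) ℂ →ₗ[ℂ] Matrix (Fin d) (Fin d) ℂ)
    (hHP : ∀ X, L Xᴴ = (L X)ᴴ)
    (hTr : ∀ X, (L X).trace = 0)
    (F : Fin (d ^ 2 - 1) → Matrix (Fin d) (Fin d) ℂ)
    (hF_traceless : ∀ i, (F i).trace = 0)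
    (hF_orthonormal : ∀ i j, ((F i)ᴴ * F j).trace = if i = j then 1 else 0)
    (hF_span : Submodule.span ℂ
        (insert (1 : Matrix (Fin d) (Fin d) ℂ) (Set.range F)) = ⊤) :
    ∃ (H : Matrix (Fin d) (Fin d) ℂ) (G : Matrix (Fin (d ^ 2 - 1)) (Fin (d ^ 2 - 1)) ℂ),
      H.IsHermitian ∧ G.IsHermitian ∧
      ∀ ρ : Matrix (Fin d) (Fin d) ℂ,
        L ρ = Complex.I • (ρ * H - H * ρ) +
          ∑ i, ∑ j, G i j •
            (F i * ρ * (F j)ᴴ -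
              (1 / 2 : ℂ) • ((F j)ᴴ * F i * ρ + ρ * ((F j)ᴴ * F i))) := by
  classical
  have hd0 : (0:ℝ) < d := by
    have : (2:ℝ) ≤ d := by exact_mod_cast hd
    linarith
  have hsqrt : Real.sqrt d ≠ 0 := by positivity
  set s : ℂ := (((Real.sqrt d)⁻¹ : ℝ) : ℂ) with hs_def
  have hs_conj : (starRingEnd ℂ) s = s := by simp [hs_def]
  have hs_ne : s ≠ 0 := by simp [hs_def, hsqrt]
  have hssd : s * s * (d:ℂ) = 1 := by
    rw [hs_def]
    have : ((Real.sqrt d)⁻¹ * (Real.sqrt d)⁻¹ * d : ℝ) = 1 := by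
      rw [← mul_inv, Real.mul_self_sqrt hd0.le, inv_mul_cancel₀ hd0.ne']
    exact_mod_cast this
  set G' : Option (Fin (d ^ 2 - 1)) → Matrix (Fin d) (Fin d) ℂ :=
    fun o => o.elim (s • 1) F with hG'
  have ortho : ∀ α β, ((G' α)ᴴ * G' β).trace = if α = β then 1 else 0 := by
    rintro (_|i) (_|j)
    · simpa [hG', Matrix.smul_mul, Matrix.mul_smul, Matrix.trace_smul, hs_conj, smul_smul] using hssd
    · simp [hG', Matrix.smul_mul, Matrix.trace_smul, hF_traceless]
    · simp [hG', Matrix.mul_smul, Matrix.trace_smul, Matrix.trace_conjTranspose, hF_traceless]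
    · simpa [hG'] using hF_orthonormal i j
  have hspan' : ∀ X : Matrix (Fin d) (Fin d) ℂ, X ∈ Submodule.span ℂ (Set.range G') := by
    intro X
    have hX : X ∈ Submodule.span ℂ (insert 1 (Set.range F)) := hF_span ▸ Submodule.mem_top
    refine Submodule.span_le.mpr ?_ hX
    rintro Y (rfl | ⟨i, rfl⟩)
    · have h1 : (1 : Matrix (Fin d) (Fin d) ℂ) = s⁻¹ • (s • 1) := by
        rw [smul_smul, inv_mul_cancel₀ hs_ne, one_smul]
      rw [h1]
      exact Submodule.smul_mem _ _ (Submodule.subset_span ⟨none, rfl⟩)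
    · exact Submodule.subset_span ⟨some i, rfl⟩
  have hrec : ∀ X : Matrix (Fin d) (Fin d) ℂ,
      ∑ α, (((G' α)ᴴ * X).trace) • G' α = X := by
    intro X
    refine Submodule.span_induction (p := fun X _ =>
      ∑ α, (((G' α)ᴴ * X).trace) • G' α = X) ?_ ?_ ?_ ?_ (hspan' X)
    · rintro x ⟨β, rfl⟩
      simp [ortho, ite_smul]
    · simp
    · intro x y _ _ hx hy
      simp only [Matrix.mul_add, Matrix.trace_add, add_smul, Finset.sum_add_distrib, hx, hy]
    · intro c x _ hx
      simp only [Matrix.mul_smul, Matrix.trace_smul, smul_eq_mul, mul_smul, ← Finset.smul_sum, hx]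
  have trace_std : ∀ (A : Matrix (Fin d) (Fin d) ℂ) a b,
      (Aᴴ * Matrix.single a b (1:ℂ)).trace = (starRingEnd ℂ) (A a b) := by
    intro A a b
    simp [Matrix.trace, Matrix.diag, Matrix.mul_apply, Matrix.single,
      Matrix.conjTranspose_apply, ite_and]
  have compl : ∀ (a b k l : Fin d),
      ∑ α, (starRingEnd ℂ) (G' α a b) * G' α k l = if a = k ∧ b = l then 1 else 0 := by
    intro a b k l
    have h2 := congrArg (fun M : Matrix (Fin d) (Fin d) ℂ => M k l)
      (hrec (Matrix.single a b 1))
    simp only [Matrix.sum_apply, Matrix.smul_apply, trace_std, smul_eq_mul] at h2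
    rw [h2, Matrix.single, Matrix.of_apply]
  set e : Fin d → Fin d → Matrix (Fin d) (Fin d) ℂ :=
    fun a b => Matrix.single a b (1:ℂ) with he
  have hT : ∀ a b : Fin d, (e a b)ᴴ = e b a := by
    intro a b; ext x y
    simp [he, Matrix.single, Matrix.conjTranspose_apply, and_comm, apply_ite]
  set c : Option (Fin (d ^ 2 - 1)) → Option (Fin (d ^ 2 - 1)) → ℂ :=
    fun α β => ∑ a, ∑ b, ((G' α)ᴴ * L (e a b) * G' β) a b with hc
  have cherm : ∀ α β, (starRingEnd ℂ) (c α β) = c β α := by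
    intro α β
    calc (starRingEnd ℂ) (c α β)
        = ∑ a, ∑ b, (((G' α)ᴴ * L (e a b) * G' β)ᴴ) b a := by
          simp only [hc, map_sum, Matrix.conjTranspose_apply, starRingEnd_apply]
      _ = ∑ a, ∑ b, ((G' β)ᴴ * L (e b a) * G' α) b a := by
          refine Finset.sum_congr rfl fun a _ => Finset.sum_congr rfl fun b _ => ?_
          rw [Matrix.conjTranspose_mul, Matrix.conjTranspose_mul,
            Matrix.conjTranspose_conjTranspose, ← hHP, hT, mul_assoc]
      _ = c β α := by rw [Finset.sum_comm]
  have complst : ∀ (a b k l : Fin d),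
      ∑ α, G' α a b * star (G' α k l) = if a = k ∧ b = l then 1 else 0 := by
    intro a b k l
    have h := congrArg star (compl a b k l)
    simpa only [star_sum, star_mul', starRingEnd_apply, star_star, apply_ite (star : ℂ → ℂ),
      star_one, star_zero] using h
  have key : ∀ m n k l : Fin d,
      ∑ α, ∑ β, c α β * (G' α k m * star (G' β l n)) = (L (e m n)) k l := by
    intro m n k l
    have expand : ∀ α β, c α β * (G' α k m * star (G' β l n))
        = ∑ τ : (Fin d × Fin d) × (Fin d × Fin d),
            (L (e τ.1.1 τ.1.2)) τ.2.2 τ.2.1 *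
              ((star (G' α τ.2.2 τ.1.1) * G' α k m) *
               (G' β τ.2.1 τ.1.2 * star (G' β l n))) := by
      intro α β
      rw [hc]
      simp only [Fintype.sum_prod_type, Matrix.mul_apply, Matrix.conjTranspose_apply,
        Finset.sum_mul]
      refine Finset.sum_congr rfl fun a _ => Finset.sum_congr rfl fun b _ =>
        Finset.sum_congr rfl fun q _ => Finset.sum_congr rfl fun p _ => ?_
      ring
    calc ∑ α, ∑ β, c α β * (G' α k m * star (G' β l n))
        = ∑ α, ∑ τ : (Fin d × Fin d) × (Fin d × Fin d), ∑ β,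
            (L (e τ.1.1 τ.1.2)) τ.2.2 τ.2.1 *
              ((star (G' α τ.2.2 τ.1.1) * G' α k m) *
               (G' β τ.2.1 τ.1.2 * star (G' β l n))) := by
          exact Finset.sum_congr rfl fun α _ => by
            simp only [expand]; exact Finset.sum_comm
      _ = ∑ τ : (Fin d × Fin d) × (Fin d × Fin d), ∑ α, ∑ β,
            (L (e τ.1.1 τ.1.2)) τ.2.2 τ.2.1 *
              ((star (G' α τ.2.2 τ.1.1) * G' α k m) *
               (G' β τ.2.1 τ.1.2 * star (G' β l n))) := Finset.sum_comm
      _ = ∑ τ : (Fin d × Fin d) × (Fin d × Fin d),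
            (L (e τ.1.1 τ.1.2)) τ.2.2 τ.2.1 *
              ((∑ α, star (G' α τ.2.2 τ.1.1) * G' α k m) *
               (∑ β, G' β τ.2.1 τ.1.2 * star (G' β l n))) := by
          refine Finset.sum_congr rfl fun τ _ => ?_
          rw [Finset.sum_mul_sum, Finset.mul_sum]
          refine Finset.sum_congr rfl fun α _ => ?_
          rw [Finset.mul_sum]
      _ = (L (e m n)) k l := by
          have hcompl' : ∀ (a b k l : Fin d),
              ∑ α, star (G' α a b) * G' α k l = if a = k ∧ b = l then 1 else 0 := by
            simpa only [starRingEnd_apply] using compl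
          simp only [hcompl', complst]
          rw [Fintype.sum_prod_type, Fintype.sum_prod_type]
          simp [Fintype.sum_prod_type, ite_and, mul_ite, mul_one, mul_zero,
            Finset.sum_ite_eq, Finset.sum_ite_eq']
  have hmulstd : ∀ (A B : Matrix (Fin d) (Fin d) ℂ) (m n k l : Fin d),
      (A * e m n * Bᴴ) k l = A k m * star (B l n) := by
    intro A B m n k l
    simp [he, Matrix.mul_apply, Matrix.conjTranspose_apply, Matrix.single,
      mul_ite, mul_one, mul_zero, ite_and, Finset.sum_ite_eq, Finset.sum_ite_eq',
      Finset.sum_mul]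
  have hrep : ∀ ρ, L ρ = ∑ α, ∑ β, c α β • (G' α * ρ * (G' β)ᴴ) := by
    have hLM : L = (∑ α, ∑ β, c α β •
        ((LinearMap.mulRight ℂ ((G' β)ᴴ)).comp (LinearMap.mulLeft ℂ (G' α)))) := by
      refine Module.Basis.ext (Matrix.stdBasis ℂ (Fin d) (Fin d)) ?_
      rintro ⟨m, n⟩
      rw [Matrix.stdBasis_eq_single]
      ext k l
      simp only [LinearMap.sum_apply, LinearMap.smul_apply, LinearMap.comp_apply,
        LinearMap.mulLeft_apply, LinearMap.mulRight_apply, Matrix.sum_apply,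
        Matrix.smul_apply, smul_eq_mul]
      rw [show Matrix.single m n (1:ℂ) = e m n from rfl]
      simp only [hmulstd]
      exact (key m n k l).symm
    intro ρ
    rw [hLM]
    simp only [LinearMap.sum_apply, LinearMap.smul_apply, LinearMap.comp_apply,
      LinearMap.mulLeft_apply, LinearMap.mulRight_apply]
  have sum_opt : ∀ (f : Option (Fin (d ^ 2 - 1)) → Matrix (Fin d) (Fin d) ℂ),
      ∑ α, f α = f none + ∑ i, f (some i) := by
    intro f
    rw [univ_option]
    exact Finset.sum_insertNone f _
  set Bm := ∑ i, (s * c (some i) none) • F i with hBm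
  set κ := c none none * (s * s) with hκ
  have hG'some : ∀ i, G' (some i) = F i := fun _ => rfl
  have hG'none : G' none = s • 1 := rfl
  have hG'noneH : (G' none)ᴴ = s • 1 := by
    rw [hG'none, Matrix.conjTranspose_smul, Matrix.conjTranspose_one, ← starRingEnd_apply,
      hs_conj]
  have hBmH : Bmᴴ = ∑ i, (s * c none (some i)) • (F i)ᴴ := by
    rw [hBm, Matrix.conjTranspose_sum]
    refine Finset.sum_congr rfl fun i _ => ?_
    rw [Matrix.conjTranspose_smul, ← starRingEnd_apply, map_mul, hs_conj, cherm]
  have hsplit : ∀ ρ, L ρ = κ • ρ + Bm * ρ + ρ * Bmᴴ +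
      ∑ i, ∑ j, c (some i) (some j) • (F i * ρ * (F j)ᴴ) := by
    intro ρ
    have t1 : c none none • (G' none * ρ * (G' none)ᴴ) = κ • ρ := by
      rw [hG'noneH, hG'none]
      simp only [Matrix.smul_mul, Matrix.mul_smul, one_mul, mul_one, smul_smul, hκ]
      all_goals module
    have t2 : ∑ j, c none (some j) • (G' none * ρ * (G' (some j))ᴴ) = ρ * Bmᴴ := by
      rw [hBmH, Finset.mul_sum]
      refine Finset.sum_congr rfl fun j _ => ?_
      rw [hG'none, hG'some]
      simp only [Matrix.smul_mul, Matrix.mul_smul, one_mul, smul_smul]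
      all_goals module
    have t3 : ∑ i, c (some i) none • (G' (some i) * ρ * (G' none)ᴴ) = Bm * ρ := by
      rw [hBm, Finset.sum_mul]
      refine Finset.sum_congr rfl fun i _ => ?_
      rw [hG'noneH, hG'some]
      simp only [Matrix.smul_mul, Matrix.mul_smul, mul_one, smul_smul, smul_mul_assoc]
      all_goals module
    rw [hrep ρ, sum_opt]
    rw [sum_opt (fun β => c none β • (G' none * ρ * (G' β)ᴴ))]
    have t4 : ∀ i, (∑ β, c (some i) β • (G' (some i) * ρ * (G' β)ᴴ))
        = c (some i) none • (G' (some i) * ρ * (G' none)ᴴ) +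
          ∑ j, c (some i) (some j) • (F i * ρ * (F j)ᴴ) :=
      fun i => sum_opt _
    simp only [t4, Finset.sum_add_distrib, t1, t2, t3]
    abel
  set Mm := ∑ i, ∑ j, c (some i) (some j) • ((F j)ᴴ * F i) with hMm
  have htr0 : ∀ ρ, ((Bm + Bmᴴ + κ • 1 + Mm) * ρ).trace = 0 := by
    intro ρ
    have h := hTr ρ
    rw [hsplit ρ] at h
    have e4 : (∑ i, ∑ j, c (some i) (some j) • (F i * ρ * (F j)ᴴ)).trace = (Mm * ρ).trace := by
      rw [hMm, Finset.sum_mul, Matrix.trace_sum, Matrix.trace_sum]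
      refine Finset.sum_congr rfl fun i _ => ?_
      rw [Finset.sum_mul, Matrix.trace_sum, Matrix.trace_sum]
      refine Finset.sum_congr rfl fun j _ => ?_
      rw [Matrix.smul_mul, Matrix.trace_smul, Matrix.trace_smul, Matrix.trace_mul_cycle]
    rw [Matrix.trace_add, Matrix.trace_add, Matrix.trace_add, Matrix.trace_smul,
      Matrix.trace_mul_comm ρ Bmᴴ, e4] at h
    simp only [Matrix.add_mul, Matrix.trace_add, Matrix.smul_mul, Matrix.trace_smul, one_mul]
    linear_combination h
  have hkill : Bm + Bmᴴ + κ • 1 + Mm = 0 := by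
    ext i j
    have h := htr0 (e j i)
    rw [show (0:ℂ) = (0 : Matrix (Fin d) (Fin d) ℂ) i j by simp] at h
    rw [← h]
    simp [he, Matrix.trace, Matrix.diag, Matrix.mul_apply, Matrix.single, ite_and,
      mul_ite, mul_one, mul_zero, Finset.sum_ite_eq, Finset.sum_ite_eq']
  set Am := Bm + (κ / 2) • 1 with hAm
  have hκc : (starRingEnd ℂ) κ = κ := by rw [hκ, map_mul, map_mul, hs_conj, cherm]
  have hκ2 : (starRingEnd ℂ) (κ / 2) = κ / 2 := by rw [map_div₀, hκc]; simp [map_ofNat]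
  have hAmH : Amᴴ = Bmᴴ + (κ / 2) • 1 := by
    rw [hAm, Matrix.conjTranspose_add, Matrix.conjTranspose_smul, Matrix.conjTranspose_one,
      ← starRingEnd_apply, hκ2]
  set Hm := (Complex.I / 2) • (Am - Amᴴ) with hHm
  have hHmHerm : Hm.IsHermitian := by
    show Hmᴴ = Hm
    rw [hHm, Matrix.conjTranspose_smul, Matrix.conjTranspose_sub,
      Matrix.conjTranspose_conjTranspose, ← starRingEnd_apply]
    have h2 : (starRingEnd ℂ) (Complex.I / 2) = -(Complex.I / 2) := by
      rw [map_div₀, Complex.conj_I]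
      simp [map_ofNat, neg_div]
    rw [h2, neg_smul, ← smul_neg, neg_sub]
  have hAM : Mm = -(Am + Amᴴ) := by
    have hsum : Am + Amᴴ = Bm + Bmᴴ + κ • 1 := by
      rw [hAm, hAmH]
      have : (κ / 2) • (1 : Matrix (Fin d) (Fin d) ℂ) + (κ / 2) • 1 = κ • 1 := by
        rw [← add_smul, add_halves]
      rw [← this]
      abel
    refine eq_neg_of_add_eq_zero_right ?_
    rw [hsum]
    exact hkill
  have hI2 : Complex.I * (Complex.I / 2) = -(1 / 2 : ℂ) := by
    rw [mul_div_assoc', Complex.I_mul_I, neg_div]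
  refine ⟨Hm, Matrix.of (fun i j => c (some i) (some j)), hHmHerm, ?_, ?_⟩
  · show _ = _
    ext i j
    simp only [Matrix.conjTranspose_apply, Matrix.of_apply, ← starRingEnd_apply]
    exact cherm _ _
  intro ρ
  rw [hsplit ρ]
  have hsum2 : ∑ i, ∑ j, (Matrix.of (fun i j => c (some i) (some j)) : Matrix (Fin (d^2-1)) (Fin (d^2-1)) ℂ) i j •
        (F i * ρ * (F j)ᴴ - (1 / 2 : ℂ) • ((F j)ᴴ * F i * ρ + ρ * ((F j)ᴴ * F i)))
      = (∑ i, ∑ j, c (some i) (some j) • (F i * ρ * (F j)ᴴ)) -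
          (1 / 2 : ℂ) • (Mm * ρ + ρ * Mm) := by
    rw [hMm, Finset.sum_mul, Finset.mul_sum, ← Finset.sum_add_distrib, Finset.smul_sum,
      ← Finset.sum_sub_distrib]
    refine Finset.sum_congr rfl fun i _ => ?_
    rw [Finset.sum_mul, Finset.mul_sum, ← Finset.sum_add_distrib, Finset.smul_sum,
      ← Finset.sum_sub_distrib]
    refine Finset.sum_congr rfl fun j _ => ?_
    simp only [Matrix.of_apply, Matrix.smul_mul, Matrix.mul_smul]
    module
  rw [hsum2]
  have hsplit2 : Am * ρ + ρ * Amᴴ = κ • ρ + Bm * ρ + ρ * Bmᴴ := by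
    rw [hAm, hAmH]
    simp only [Matrix.add_mul, Matrix.mul_add, Matrix.smul_mul, Matrix.mul_smul, one_mul,
      mul_one]
    module
  rw [← hsplit2, hAM, hHm]
  simp only [Matrix.mul_smul, Matrix.smul_mul, Matrix.neg_mul, Matrix.mul_neg,
    Matrix.sub_mul, Matrix.mul_sub, Matrix.add_mul, Matrix.mul_add, smul_sub, smul_add,
    smul_smul, smul_neg, hI2]
  module
end
end
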